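/- Telescoping bound via the exclusion Dirichlet form: fix y ∈ Z^d with 0 < |y|_1 ≤ R and a path z_0 = y, z_1, ..., z_n = −y with p(z_i − z_{i−1}) > 0 for each i. Then for every bounded measurable f : Ω → R, |∫ [η(y) − η(−y)] f(η) dν_ρ| ≤ Σ_{i=1}^n p(z_i − z_{i−1})^{−1/2} · D_se(f)^{1/2}, where D_se(f) = (1/2) Σ_{u,v} p(v−u) ∫ [f(η^{u,v}) − f(η)]^2 dν_ρ. -/

import Mathlib

open MeasureTheory

noncomputable section

namespace SEPRC

/-- The lattice `ℤ^d`. -/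
abbrev Zd (d : ℕ) := Fin d → ℤ

/-- The configuration space `Ω = {0,1}^{ℤ^d}`. -/
abbrev Cfg (d : ℕ) := Zd d → Bool

/-- Occupation variable as a real number. -/
def ind : Bool → ℝ := fun b => if b then 1 else 0

/-- The ℓ¹ norm on `ℤ^d`. -/
def l1 {d : ℕ} (y : Zd d) : ℕ := ∑ i, (y i).natAbs

/-- The shift `(τ_y η)(x) = η(x + y)`. -/
def shift {d : ℕ} (y : Zd d) (η : Cfg d) : Cfg d := fun x => η (x + y)

/-- The configuration `η^{u,v}` with the occupation variables at `u` and `v` exchanged. -/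
def swap {d : ℕ} (u v : Zd d) (η : Cfg d) : Cfg d :=
  fun x => if x = u then η v else if x = v then η u else η x

/-- `ν` is the Bernoulli product measure of density `ρ` on `{0,1}^{ℤ^d}`. -/
def IsBernoulliProduct (d : ℕ) (ρ : ℝ) (ν : Measure (Cfg d)) : Prop :=
  IsProbabilityMeasure ν ∧
  ∀ (S : Finset (Zd d)) (a : Zd d → Bool),
    ν {η | ∀ z ∈ S, η z = a z} =
      ∏ z ∈ S, ENNReal.ofReal (if a z then ρ else 1 - ρ)

/-- A cylinder (local) function: it depends on finitely many coordinates. -/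
def IsCylinder {d : ℕ} (f : Cfg d → ℝ) : Prop :=
  ∃ Λ : Finset (Zd d), ∀ η η' : Cfg d, (∀ x ∈ Λ, η x = η' x) → f η = f η'


section Aux

variable {d : ℕ}

lemma swap_apply (u v : Zd d) (η : Cfg d) (x : Zd d) :
    swap u v η x = η (Equiv.swap u v x) := by
  simp only [swap, Equiv.swap_apply_def]
  split_ifs <;> rfl

lemma swap_comm (u v : Zd d) : swap u v = swap v u := by
  funext η x
  simp only [swap]
  split_ifs with h1 h2 <;> simp_all

lemma measurable_swapFun (u v : Zd d) : Measurable (swap u v) := by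
  apply measurable_pi_lambda
  intro x
  simp only [swap]
  split_ifs <;> exact measurable_pi_apply _

def cyl (S : Finset (Zd d)) (a : Zd d → Bool) : Set (Cfg d) := {η | ∀ z ∈ S, η z = a z}

lemma measurableSet_cyl (S : Finset (Zd d)) (a : Zd d → Bool) : MeasurableSet (cyl S a) := by
  have h : cyl S a = ⋂ z ∈ S, (fun η : Cfg d => η z) ⁻¹' {a z} := by
    ext η; simp [cyl]
  rw [h]
  exact MeasurableSet.biInter S.countable_toSet fun z _ =>
    (measurable_pi_apply z) (measurableSet_singleton (a z))

def cylSet (d : ℕ) : Set (Set (Cfg d)) := {s | ∃ S a, s = cyl S a}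

lemma generateFrom_cyl :
    (inferInstance : MeasurableSpace (Cfg d)) = MeasurableSpace.generateFrom (cylSet d) := by
  refine le_antisymm ?_ (MeasurableSpace.generateFrom_le ?_)
  · rw [show (inferInstance : MeasurableSpace (Cfg d))
        = ⨆ z : Zd d, MeasurableSpace.comap (fun η : Cfg d => η z) inferInstance from rfl]
    refine iSup_le fun z => ?_
    rintro s ⟨s', -, rfl⟩
    have h : (fun η : Cfg d => η z) ⁻¹' s' = ⋃ b ∈ s', cyl {z} (fun _ => b) := by
      ext η; simp [cyl]
    rw [h]
    exact MeasurableSet.biUnion s'.to_countable fun b _ =>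
      MeasurableSpace.measurableSet_generateFrom ⟨{z}, fun _ => b, rfl⟩
  · rintro s ⟨S, a, rfl⟩; exact measurableSet_cyl S a

lemma isPiSystem_cyl : IsPiSystem (cylSet d) := by
  rintro s ⟨S, a, rfl⟩ t ⟨T, b, rfl⟩ hne
  obtain ⟨η₀, h₀s, h₀t⟩ := hne
  refine ⟨S ∪ T, fun w => if w ∈ S then a w else b w, ?_⟩
  ext η
  simp only [cyl, Set.mem_inter_iff, Set.mem_setOf_eq, Finset.mem_union]
  constructor
  · rintro ⟨hs, ht⟩ w hw
    by_cases hwS : w ∈ S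
    · simp [hwS, hs w hwS]
    · simp only [if_neg hwS]; exact ht w (hw.resolve_left hwS)
  · intro h
    constructor
    · intro w hw
      have := h w (Or.inl hw); rwa [if_pos hw] at this
    · intro w hw
      have := h w (Or.inr hw)
      by_cases hwS : w ∈ S
      · rw [if_pos hwS] at this
        rw [this, ← h₀s w hwS, h₀t w hw]
      · rwa [if_neg hwS] at this

lemma map_swap {ρ : ℝ} {ν : Measure (Cfg d)} (hν : IsBernoulliProduct d ρ ν)
    (u v : Zd d) : ν.map (swap u v) = ν := by
  obtain ⟨hprob, hcyl⟩ := hν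
  haveI := hprob
  haveI : IsProbabilityMeasure (ν.map (swap u v)) :=
    Measure.isProbabilityMeasure_map (measurable_swapFun u v).aemeasurable
  refine ext_of_generate_finite (cylSet d) generateFrom_cyl isPiSystem_cyl ?_ (by
    simp [measure_univ])
  rintro s ⟨S, a, rfl⟩
  rw [Measure.map_apply (measurable_swapFun u v) (measurableSet_cyl S a)]
  have hσσ : ∀ w : Zd d, Equiv.swap u v (Equiv.swap u v w) = w := fun w =>
    Equiv.swap_apply_self u v w
  have hpre : swap u v ⁻¹' cyl S a
      = cyl (S.image (Equiv.swap u v)) (a ∘ Equiv.swap u v) := by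
    ext η
    simp only [cyl, Set.mem_preimage, Set.mem_setOf_eq, Finset.mem_image, Function.comp]
    constructor
    · rintro h w ⟨w', hw', rfl⟩
      rw [hσσ w']
      rw [← h w' hw', swap_apply]
    · intro h w hw
      rw [swap_apply]
      have := h (Equiv.swap u v w) ⟨w, hw, rfl⟩
      rwa [hσσ w] at this
  rw [hpre]
  have h1 := hcyl (S.image (Equiv.swap u v)) (a ∘ Equiv.swap u v)
  have h2 := hcyl S a
  rw [show cyl (S.image (Equiv.swap u v)) (a ∘ Equiv.swap u v)
      = {η | ∀ z ∈ S.image (Equiv.swap u v), η z = (a ∘ Equiv.swap u v) z} from rfl, h1,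
    show cyl S a = {η | ∀ z ∈ S, η z = a z} from rfl, h2]
  rw [Finset.prod_image (fun x _ y _ h => (Equiv.swap u v).injective h)]
  refine Finset.prod_congr rfl fun w _ => ?_
  simp [Function.comp, hσσ w]

lemma ind_abs_le (b : Bool) : |ind b| ≤ 1 := by
  cases b <;> simp [ind]

lemma measurable_ind_eval (x : Zd d) : Measurable fun η : Cfg d => ind (η x) := by
  unfold ind
  have hs : MeasurableSet {η : Cfg d | η x = true} := by
    have h : {η : Cfg d | η x = true} = (fun η : Cfg d => η x) ⁻¹' {true} := by ext η; simp
    rw [h]; exact (measurable_pi_apply x) (measurableSet_singleton true)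
  exact Measurable.ite hs measurable_const measurable_const

lemma integrable_of_bound (ν : Measure (Cfg d)) [IsProbabilityMeasure ν]
    (g : Cfg d → ℝ) (hg : Measurable g) (C : ℝ) (hC : ∀ η, |g η| ≤ C) :
    Integrable g ν :=
  (integrable_const C).mono' hg.aestronglyMeasurable
    (Filter.Eventually.of_forall fun η => by simpa [Real.norm_eq_abs] using hC η)

lemma int_abs_le_sqrt (ν : Measure (Cfg d)) [IsProbabilityMeasure ν]
    (g : Cfg d → ℝ) (hg : Measurable g) (C : ℝ) (hb : ∀ η, |g η| ≤ C) :
    ∫ η, |g η| ∂ν ≤ Real.sqrt (∫ η, (g η)^2 ∂ν) := by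
  have hC : 0 ≤ C := (abs_nonneg _).trans (hb fun _ => true)
  have hint_abs : Integrable (fun η => |g η|) ν :=
    integrable_of_bound ν _ hg.abs C (fun η => by simpa using hb η)
  have hint_sq : Integrable (fun η => g η ^ 2) ν := by
    refine integrable_of_bound ν _ (hg.pow_const 2) (C^2) fun η => ?_
    rw [abs_pow]
    exact pow_le_pow_left₀ (abs_nonneg _) (hb η) 2
  set A := ∫ η, |g η| ∂ν with hA
  have hA0 : 0 ≤ A := integral_nonneg fun η => abs_nonneg _
  have hnn : 0 ≤ ∫ η, (|g η| - A)^2 ∂ν := integral_nonneg fun η => sq_nonneg _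
  have hexp : ∫ η, (|g η| - A)^2 ∂ν = (∫ η, (g η)^2 ∂ν) - A^2 := by
    have heq : (fun η => (|g η| - A)^2) = fun η => (g η^2 - (2*A)*|g η|) + A^2 := by
      funext η
      rw [sub_sq, sq_abs]; ring
    have hsub : Integrable (fun η => g η ^ 2 - (2*A)*|g η|) ν :=
      hint_sq.sub (hint_abs.const_mul (2*A))
    rw [heq, integral_add hsub (integrable_const _),
      integral_sub hint_sq (hint_abs.const_mul (2*A)), integral_const_mul, integral_const]
    simp only [measure_univ, probReal_univ, ENNReal.toReal_one, smul_eq_mul, one_mul, ← hA]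
    ring
  have hle : A^2 ≤ ∫ η, (g η)^2 ∂ν := by linarith
  calc A = Real.sqrt (A^2) := (Real.sqrt_sq hA0).symm
    _ ≤ _ := Real.sqrt_le_sqrt hle

lemma step_bound (ν : Measure (Cfg d)) [IsProbabilityMeasure ν]
    (hmap : ∀ u v : Zd d, ν.map (swap u v) = ν)
    (f : Cfg d → ℝ) (hfm : Measurable f) (Cf : ℝ) (hfb : ∀ η, |f η| ≤ Cf)
    (u v : Zd d) :
    |∫ η, (ind (η u) - ind (η v)) * f η ∂ν|
      ≤ Real.sqrt (∫ η, (f (swap u v η) - f η)^2 ∂ν) := by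
  have hCf : 0 ≤ Cf := (abs_nonneg _).trans (hfb fun _ => true)
  have hms := measurable_swapFun u v
  have hfsw : Measurable fun η => f (swap u v η) := hfm.comp hms
  have hΔm : Measurable fun η => f (swap u v η) - f η := hfsw.sub hfm
  have hΔb : ∀ η, |f (swap u v η) - f η| ≤ 2*Cf := fun η => by
    have h1 := abs_le.mp (hfb (swap u v η))
    have h2 := abs_le.mp (hfb η)
    exact abs_le.mpr ⟨by linarith [h1.1, h2.2], by linarith [h1.2, h2.1]⟩
  have hbound_mul : ∀ (x w : Zd d) (g : Cfg d → ℝ) (C : ℝ), (∀ η, |g η| ≤ C) →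
      ∀ η : Cfg d, |ind (η x) * g η| ≤ C := by
    intro x w g C hC η
    rw [abs_mul]
    calc |ind (η x)| * |g η| ≤ 1 * C :=
          mul_le_mul (ind_abs_le _) (hC η) (abs_nonneg _) zero_le_one
      _ = C := one_mul C
  have hi_uf : Integrable (fun η => ind (η u) * f η) ν :=
    integrable_of_bound ν _ ((measurable_ind_eval u).mul hfm) Cf
      (hbound_mul u u f Cf hfb)
  have hi_vf : Integrable (fun η => ind (η v) * f η) ν :=
    integrable_of_bound ν _ ((measurable_ind_eval v).mul hfm) Cf
      (hbound_mul v v f Cf hfb)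
  have hi_vsw : Integrable (fun η => ind (η v) * f (swap u v η)) ν :=
    integrable_of_bound ν _ ((measurable_ind_eval v).mul hfsw) Cf
      (hbound_mul v v _ Cf fun η => hfb _)
  have hi_vΔ : Integrable (fun η => ind (η v) * (f (swap u v η) - f η)) ν :=
    integrable_of_bound ν _ ((measurable_ind_eval v).mul hΔm) (2*Cf)
      (hbound_mul v v _ (2*Cf) hΔb)
  have hi_absΔ : Integrable (fun η => |f (swap u v η) - f η|) ν :=
    integrable_of_bound ν _ hΔm.abs (2*Cf) (fun η => by simpa using hΔb η)
  have hcov : ∀ (g : Cfg d → ℝ), Measurable g →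
      ∫ η, g (swap u v η) ∂ν = ∫ η, g η ∂ν := by
    intro g hg
    have hg' : AEStronglyMeasurable g (ν.map (swap u v)) := by
      rw [hmap]; exact hg.aestronglyMeasurable
    calc ∫ η, g (swap u v η) ∂ν = ∫ x, g x ∂(ν.map (swap u v)) :=
          (integral_map hms.aemeasurable hg').symm
      _ = ∫ x, g x ∂ν := by rw [hmap]
  have hswap_u : ∀ η : Cfg d, swap u v η u = η v := fun η => by simp [swap]
  have h1 : ∫ η, ind (η u) * f η ∂ν = ∫ η, ind (η v) * f (swap u v η) ∂ν := by
    have h := hcov (fun η => ind (η u) * f η) ((measurable_ind_eval u).mul hfm)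
    simp only [hswap_u] at h
    exact h.symm
  have key : ∫ η, (ind (η u) - ind (η v)) * f η ∂ν
      = ∫ η, ind (η v) * (f (swap u v η) - f η) ∂ν := by
    simp only [sub_mul, mul_sub]
    rw [integral_sub hi_uf hi_vf, integral_sub hi_vsw hi_vf, h1]
  rw [key]
  calc |∫ η, ind (η v) * (f (swap u v η) - f η) ∂ν|
      ≤ ∫ η, |ind (η v)| * |f (swap u v η) - f η| ∂ν := by
        have h := norm_integral_le_integral_norm (μ := ν)
          (fun η => ind (η v) * (f (swap u v η) - f η))
        simpa [Real.norm_eq_abs, abs_mul] using h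
    _ ≤ ∫ η, |f (swap u v η) - f η| ∂ν := by
        refine integral_mono (by simpa [abs_mul] using hi_vΔ.abs) hi_absΔ fun η => ?_
        exact mul_le_of_le_one_left (abs_nonneg _) (ind_abs_le _)
    _ ≤ Real.sqrt (∫ η, (f (swap u v η) - f η)^2 ∂ν) :=
        int_abs_le_sqrt ν _ hΔm (2*Cf) hΔb

end Aux

/-- telescoping bound via the exclusion Dirichlet form: along a path
`z_0 = y, …, z_n = −y` with `p(z_i − z_{i−1}) > 0`,
`|∫ [η(y) − η(−y)] f dν_ρ| ≤ (Σ_i p(z_i − z_{i−1})^{−1/2}) · D_se(f)^{1/2}`. -/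
theorem stmt_9 (d R : ℕ) (hR : 1 ≤ R) (ρ : ℝ) (hρ : ρ ∈ Set.Icc (0:ℝ) 1)
    (ν : Measure (Cfg d)) (hν : IsBernoulliProduct d ρ ν)
    (p : Zd d → ℝ) (hp01 : ∀ x, p x ∈ Set.Icc (0:ℝ) 1)
    (hpsym : ∀ x, p (-x) = p x)
    (hpsupp : ∀ x, 0 < p x ↔ (x ≠ 0 ∧ l1 x ≤ R))
    (y : Zd d) (hy : y ≠ 0 ∧ l1 y ≤ R)
    (n : ℕ) (hn : 1 ≤ n) (z : ℕ → Zd d) (hz0 : z 0 = y) (hzn : z n = -y)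
    (hstep : ∀ i : ℕ, 1 ≤ i → i ≤ n → 0 < p (z i - z (i - 1)))
    (f : Cfg d → ℝ) (hfm : Measurable f) (Cf : ℝ) (hfb : ∀ η, |f η| ≤ Cf)
    (hsummable : Summable fun uv : Zd d × Zd d =>
      p (uv.2 - uv.1) * ∫ η, (f (swap uv.1 uv.2 η) - f η)^2 ∂ν) :
    |∫ η, (ind (η y) - ind (η (-y))) * f η ∂ν|
      ≤ (∑ i ∈ Finset.Icc 1 n, Real.sqrt (p (z i - z (i - 1)))⁻¹) *
        Real.sqrt ((1/2) * ∑' uv : Zd d × Zd d,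
          p (uv.2 - uv.1) * ∫ η, (f (swap uv.1 uv.2 η) - f η)^2 ∂ν) := by
  haveI : IsProbabilityMeasure ν := hν.1
  have hmap : ∀ u v : Zd d, ν.map (swap u v) = ν := map_swap hν
  set t : Zd d × Zd d → ℝ :=
    fun uv => p (uv.2 - uv.1) * ∫ η, (f (swap uv.1 uv.2 η) - f η)^2 ∂ν with ht
  have ht_nonneg : ∀ uv, 0 ≤ t uv := fun uv =>
    mul_nonneg (hp01 _).1 (integral_nonneg fun η => sq_nonneg _)
  set D : ℝ := (1/2) * ∑' uv, t uv with hD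
  have hT_nonneg : 0 ≤ ∑' uv, t uv := tsum_nonneg ht_nonneg
  have hD_nonneg : 0 ≤ D := by positivity
  have hstep' : ∀ i ∈ Finset.range n,
      |∫ η, (ind (η (z i)) - ind (η (z (i+1)))) * f η ∂ν|
        ≤ Real.sqrt (p (z (i+1) - z i))⁻¹ * Real.sqrt D := by
    intro i hi
    have hin : i < n := Finset.mem_range.mp hi
    have hpi : 0 < p (z (i+1) - z i) := by
      have h := hstep (i+1) (Nat.le_add_left 1 i) hin
      simpa using h
    set u := z i with hu
    set v := z (i+1) with hv
    have hne : u ≠ v := by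
      intro h
      have h0 : v - u = 0 := by rw [h]; simp
      rw [h0] at hpi
      exact ((hpsupp 0).mp hpi).1 rfl
    set I : ℝ := ∫ η, (f (swap u v η) - f η)^2 ∂ν with hI
    have hI_nonneg : 0 ≤ I := integral_nonneg fun η => sq_nonneg _
    have h1 : |∫ η, (ind (η u) - ind (η v)) * f η ∂ν| ≤ Real.sqrt I :=
      step_bound ν hmap f hfm Cf hfb u v
    have htuv : t (u, v) = p (v - u) * I := rfl
    have htvu : t (v, u) = p (v - u) * I := by
      show p (u - v) * ∫ η, (f (swap v u η) - f η)^2 ∂ν = p (v - u) * I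
      rw [show u - v = -(v - u) from (neg_sub v u).symm, hpsym, swap_comm v u]
    have hpairne : ((u, v) : Zd d × Zd d) ≠ (v, u) := fun h => hne (congrArg Prod.fst h)
    have hsum2 : p (v - u) * I + p (v - u) * I ≤ ∑' uv, t uv := by
      have h := Summable.sum_le_tsum ({(u,v), (v,u)} : Finset (Zd d × Zd d))
        (fun uv _ => ht_nonneg uv) hsummable
      rwa [Finset.sum_pair hpairne, htuv, htvu] at h
    have hqID : p (v - u) * I ≤ D := by rw [hD]; linarith
    have hID : I ≤ (p (v - u))⁻¹ * D := by
      rw [← mul_le_mul_iff_right₀ hpi, ← mul_assoc, mul_inv_cancel₀ hpi.ne', one_mul]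
      exact hqID
    calc |∫ η, (ind (η u) - ind (η v)) * f η ∂ν| ≤ Real.sqrt I := h1
      _ ≤ Real.sqrt ((p (v - u))⁻¹ * D) := Real.sqrt_le_sqrt hID
      _ = Real.sqrt (p (v - u))⁻¹ * Real.sqrt D :=
          Real.sqrt_mul (inv_nonneg.mpr hpi.le) D
  have htel : (fun η : Cfg d => (ind (η y) - ind (η (-y))) * f η)
      = fun η => ∑ i ∈ Finset.range n, (ind (η (z i)) - ind (η (z (i+1)))) * f η := by
    funext η
    rw [← Finset.sum_mul, Finset.sum_range_sub' (fun i => ind (η (z i))), hz0, hzn]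
  have hint_i : ∀ i ∈ Finset.range n,
      Integrable (fun η => (ind (η (z i)) - ind (η (z (i+1)))) * f η) ν := by
    intro i _
    have hCf : 0 ≤ Cf := (abs_nonneg _).trans (hfb fun _ => true)
    refine integrable_of_bound ν _
      (((measurable_ind_eval (z i)).sub (measurable_ind_eval (z (i+1)))).mul hfm)
      (2 * Cf) fun η => ?_
    rw [abs_mul]
    have h1 := abs_le.mp (ind_abs_le (η (z i)))
    have h2 := abs_le.mp (ind_abs_le (η (z (i+1))))
    have h3 : |ind (η (z i)) - ind (η (z (i+1)))| ≤ 2 :=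
      abs_le.mpr ⟨by linarith [h1.1, h2.2], by linarith [h1.2, h2.1]⟩
    exact mul_le_mul h3 (hfb η) (abs_nonneg _) (by norm_num)
  have hsplit : ∫ η, (ind (η y) - ind (η (-y))) * f η ∂ν
      = ∑ i ∈ Finset.range n, ∫ η, (ind (η (z i)) - ind (η (z (i+1)))) * f η ∂ν := by
    rw [htel]
    exact integral_finset_sum (Finset.range n) hint_i
  rw [hsplit]
  calc |∑ i ∈ Finset.range n, ∫ η, (ind (η (z i)) - ind (η (z (i+1)))) * f η ∂ν|
      ≤ ∑ i ∈ Finset.range n, |∫ η, (ind (η (z i)) - ind (η (z (i+1)))) * f η ∂ν| :=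
        Finset.abs_sum_le_sum_abs _ _
    _ ≤ ∑ i ∈ Finset.range n, Real.sqrt (p (z (i+1) - z i))⁻¹ * Real.sqrt D :=
        Finset.sum_le_sum hstep'
    _ = (∑ i ∈ Finset.range n, Real.sqrt (p (z (i+1) - z i))⁻¹) * Real.sqrt D :=
        (Finset.sum_mul _ _ _).symm
    _ = (∑ i ∈ Finset.Icc 1 n, Real.sqrt (p (z i - z (i-1)))⁻¹) * Real.sqrt D := by
        congr 1
        refine Finset.sum_nbij' (fun i => i + 1) (fun i => i - 1)
          (fun a ha => ?_) (fun a ha => ?_) (fun a ha => ?_) (fun a ha => ?_)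
          (fun a ha => ?_)
        · simp only [Finset.mem_range] at ha; simp only [Finset.mem_Icc]; omega
        · simp only [Finset.mem_Icc] at ha; simp only [Finset.mem_range]; omega
        · simp
        · simp only [Finset.mem_Icc] at ha; omega
        · simp


end SEPRC
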